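/- Let 𝕏 ∈ ℝ^{n×a}, 𝕐 ∈ ℝ^{n×b}, and w ∈ ℝ^n. Assume S_X = 𝕏ᵀ𝕏/n, S_Y = 𝕐ᵀ𝕐/n and the Gram matrix of (𝕐, w) are positive definite, and let e = w − 𝕐(𝕐ᵀ𝕐)^{-1}𝕐ᵀ w. If ‖C(𝕐,𝕏)‖_F + ‖C(e,𝕏)‖_F > 0, then ‖C((𝕐,w),𝕏)‖_F − ‖C(𝕐,𝕏)‖_F = ‖C(e,𝕏)‖_F² / ( √(‖C(𝕐,𝕏)‖_F² + ‖C(e,𝕏)‖_F²) + ‖C(𝕐,𝕏)‖_F ). -/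

import Mathlib

open Matrix

noncomputable section

/-- Squared Frobenius norm of a real matrix: `‖M‖_F² = tr (M Mᵀ)`. -/
def frobSq {m n : Type*} [Fintype m] [Fintype n] (M : Matrix m n ℝ) : ℝ :=
  Matrix.trace (M * Mᵀ)

/-- Frobenius norm of a real matrix. -/
def frobNorm {m n : Type*} [Fintype m] [Fintype n] (M : Matrix m n ℝ) : ℝ :=
  Real.sqrt (frobSq M)

/-- The square root of a positive semidefinite matrix, as `Matrix.PosSemidef.sqrt` was defined
in the older Mathlib (removed since): `U * diagonal (√ eigenvalues) * Uᴴ`. -/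
def posSemidefSqrt {n : Type*} [Fintype n] [DecidableEq n] {A : Matrix n n ℝ}
    (hA : A.PosSemidef) : Matrix n n ℝ :=
  hA.1.eigenvectorUnitary.1 * diagonal ((√·) ∘ hA.1.eigenvalues) *
    (star hA.1.eigenvectorUnitary : Matrix n n ℝ)

open Classical in
/-- `A^{-1/2}`: the inverse of the unique positive definite square root of a positive
definite matrix `A` (junk value `0` if `A` is not positive definite). -/
def invSqrt {n : Type*} [Fintype n] [DecidableEq n] (A : Matrix n n ℝ) : Matrix n n ℝ :=
  if h : A.PosDef then (posSemidefSqrt h.posSemidef)⁻¹ else 0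

/-- The sample coherence matrix `C(𝕐,𝕏) = n⁻¹ S_Y^{-1/2} 𝕐ᵀ 𝕏 S_X^{-1/2}`, where
`S_X = 𝕏ᵀ𝕏/n` and `S_Y = 𝕐ᵀ𝕐/n`. -/
def coh {ν a b : Type*} [Fintype ν] [Fintype a] [Fintype b] [DecidableEq a] [DecidableEq b]
    (N : ℕ) (Y : Matrix ν b ℝ) (X : Matrix ν a ℝ) : Matrix b a ℝ :=
  (N : ℝ)⁻¹ • (invSqrt ((N : ℝ)⁻¹ • (Yᵀ * Y)) * Yᵀ * X * invSqrt ((N : ℝ)⁻¹ • (Xᵀ * X)))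

/-- The matrix obtained from `X` by appending the vector `z` as an extra column. -/
def appendCol {ν a : Type*} (X : Matrix ν a ℝ) (z : ν → ℝ) : Matrix ν (a ⊕ Unit) ℝ :=
  Matrix.of fun i => Sum.elim (X i) fun _ => z i

/-- A vector viewed as a one-column matrix. -/
def colM {ν : Type*} (z : ν → ℝ) : Matrix ν Unit ℝ :=
  Matrix.of fun i _ => z i

/-- The least-squares residual of `z` regressed on the columns of `X`:
`r = z − X (XᵀX)⁻¹ Xᵀ z`. -/
def resid {ν a : Type*} [Fintype ν] [Fintype a] [DecidableEq a]
    (X : Matrix ν a ℝ) (z : ν → ℝ) : ν → ℝ :=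
  z - (X * (Xᵀ * X)⁻¹ * Xᵀ).mulVec z


section Aux

set_option linter.unusedSectionVars false

lemma frobSq_nonneg {m n : Type*} [Fintype m] [Fintype n] (M : Matrix m n ℝ) : 0 ≤ frobSq M := by
  unfold frobSq Matrix.trace
  refine Finset.sum_nonneg fun i _ => ?_
  simp only [Matrix.diag_apply, Matrix.mul_apply, Matrix.transpose_apply]
  exact Finset.sum_nonneg fun j _ => mul_self_nonneg _

lemma posSemidefSqrt_mul_self {n : Type*} [Fintype n] [DecidableEq n] {A : Matrix n n ℝ}
    (hA : A.PosSemidef) : posSemidefSqrt hA * posSemidefSqrt hA = A := by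
  have hU : (star hA.1.eigenvectorUnitary : Matrix n n ℝ) * hA.1.eigenvectorUnitary.1 = 1 :=
    Unitary.coe_star_mul_self _
  have hD : diagonal ((√·) ∘ hA.1.eigenvalues) * diagonal ((√·) ∘ hA.1.eigenvalues) =
      diagonal (RCLike.ofReal ∘ hA.1.eigenvalues) := by
    rw [diagonal_mul_diagonal]
    congr 1
    funext i
    simp [Real.mul_self_sqrt (hA.eigenvalues_nonneg i)]
  conv_rhs => rw [hA.1.spectral_theorem, Unitary.conjStarAlgAut_apply]
  rw [← hD]
  unfold posSemidefSqrt
  have e : hA.1.eigenvectorUnitary.1 * diagonal ((√·) ∘ hA.1.eigenvalues) *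
      (star hA.1.eigenvectorUnitary : Matrix n n ℝ) *
      (hA.1.eigenvectorUnitary.1 * diagonal ((√·) ∘ hA.1.eigenvalues) *
      (star hA.1.eigenvectorUnitary : Matrix n n ℝ)) =
      hA.1.eigenvectorUnitary.1 * diagonal ((√·) ∘ hA.1.eigenvalues) *
      ((star hA.1.eigenvectorUnitary : Matrix n n ℝ) * hA.1.eigenvectorUnitary.1) *
      diagonal ((√·) ∘ hA.1.eigenvalues) * (star hA.1.eigenvectorUnitary : Matrix n n ℝ) := by
    simp only [Matrix.mul_assoc]
  rw [e, hU, Matrix.mul_one]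
  simp only [Matrix.mul_assoc]

lemma posSemidefSqrt_isHermitian {n : Type*} [Fintype n] [DecidableEq n] {A : Matrix n n ℝ}
    (hA : A.PosSemidef) : (posSemidefSqrt hA).IsHermitian := by
  unfold posSemidefSqrt
  rw [Matrix.IsHermitian]
  simp [Matrix.conjTranspose_mul, Matrix.mul_assoc, Matrix.diagonal_conjTranspose,
    Matrix.star_eq_conjTranspose]

lemma invSqrt_mul_self {n : Type*} [Fintype n] [DecidableEq n] {A : Matrix n n ℝ}
    (hA : A.PosDef) : invSqrt A * invSqrt A = A⁻¹ := by
  rw [invSqrt, dif_pos hA, ← Matrix.mul_inv_rev, posSemidefSqrt_mul_self hA.posSemidef]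

lemma invSqrt_transpose {n : Type*} [Fintype n] [DecidableEq n] {A : Matrix n n ℝ}
    (hA : A.PosDef) : (invSqrt A)ᵀ = invSqrt A := by
  rw [invSqrt, dif_pos hA, Matrix.transpose_nonsing_inv]
  congr 1
  have h := posSemidefSqrt_isHermitian hA.posSemidef
  rw [← Matrix.conjTranspose_eq_transpose_of_trivial]
  exact h

lemma posDef_smul_real {m : Type*} [Fintype m] {A : Matrix m m ℝ} (hA : A.PosDef) {c : ℝ}
    (hc : 0 < c) : (c • A).PosDef := by
  refine Matrix.PosDef.of_dotProduct_mulVec_pos ?_ fun x hx => ?_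
  · rw [Matrix.IsHermitian, Matrix.conjTranspose_smul, hA.1]; norm_num
  · rw [Matrix.smul_mulVec, dotProduct_smul]
    exact mul_pos hc (hA.dotProduct_mulVec_pos hx)

lemma frobSq_coh {ν a b : Type*} [Fintype ν] [Fintype a] [Fintype b] [DecidableEq a]
    [DecidableEq b] (N : ℕ) (hN : (N : ℝ) ≠ 0) (X : Matrix ν a ℝ) (Y : Matrix ν b ℝ)
    (hSX : ((N : ℝ)⁻¹ • (Xᵀ * X)).PosDef) (hSY : ((N : ℝ)⁻¹ • (Yᵀ * Y)).PosDef) :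
    frobSq (coh N Y X) =
      Matrix.trace ((X * (Xᵀ * X)⁻¹ * Xᵀ) * (Y * (Yᵀ * Y)⁻¹ * Yᵀ)) := by
  have hNpos : 0 < (N : ℝ) := lt_of_le_of_ne (Nat.cast_nonneg N) (Ne.symm hN)
  have hGX : (Xᵀ * X).PosDef := by
    have := posDef_smul_real hSX hNpos
    rwa [smul_smul, mul_inv_cancel₀ hN, one_smul] at this
  have hGY : (Yᵀ * Y).PosDef := by
    have := posDef_smul_real hSY hNpos
    rwa [smul_smul, mul_inv_cancel₀ hN, one_smul] at this
  have hSXinv : ((N : ℝ)⁻¹ • (Xᵀ * X))⁻¹ = (N : ℝ) • (Xᵀ * X)⁻¹ := by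
    apply Matrix.inv_eq_right_inv
    rw [Matrix.smul_mul, Matrix.mul_smul, smul_smul, inv_mul_cancel₀ hN, one_smul,
      Matrix.mul_nonsing_inv _ hGX.det_pos.ne'.isUnit]
  have hSYinv : ((N : ℝ)⁻¹ • (Yᵀ * Y))⁻¹ = (N : ℝ) • (Yᵀ * Y)⁻¹ := by
    apply Matrix.inv_eq_right_inv
    rw [Matrix.smul_mul, Matrix.mul_smul, smul_smul, inv_mul_cancel₀ hN, one_smul,
      Matrix.mul_nonsing_inv _ hGY.det_pos.ne'.isUnit]
  set Q := invSqrt ((N : ℝ)⁻¹ • (Xᵀ * X)) with hQdef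
  set R := invSqrt ((N : ℝ)⁻¹ • (Yᵀ * Y)) with hRdef
  have hQt : Qᵀ = Q := invSqrt_transpose hSX
  have hRt : Rᵀ = R := invSqrt_transpose hSY
  have hQQ : Q * Q = (N : ℝ) • (Xᵀ * X)⁻¹ := by rw [hQdef, invSqrt_mul_self hSX, hSXinv]
  have hRR : R * R = (N : ℝ) • (Yᵀ * Y)⁻¹ := by rw [hRdef, invSqrt_mul_self hSY, hSYinv]
  have hDt : (R * Yᵀ * X * Q)ᵀ = Q * (Xᵀ * (Y * R)) := by
    simp only [Matrix.transpose_mul, Matrix.transpose_transpose, hQt, hRt, Matrix.mul_assoc]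
  rw [frobSq, coh, Matrix.transpose_smul, hDt, Matrix.smul_mul, Matrix.mul_smul, smul_smul,
    Matrix.trace_smul]
  have e1 : R * Yᵀ * X * Q * (Q * (Xᵀ * (Y * R))) = R * (Yᵀ * X * (Q * Q) * (Xᵀ * (Y * R))) := by
    simp only [Matrix.mul_assoc]
  rw [e1, Matrix.trace_mul_comm]
  have e2 : Yᵀ * X * (Q * Q) * (Xᵀ * (Y * R)) * R = Yᵀ * X * (Q * Q) * Xᵀ * Y * (R * R) := by
    simp only [Matrix.mul_assoc]
  rw [e2, hQQ, hRR]
  simp only [Matrix.mul_smul, Matrix.smul_mul, smul_smul, Matrix.trace_smul, smul_eq_mul]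
  have e3 : Matrix.trace (Yᵀ * X * (Xᵀ * X)⁻¹ * Xᵀ * Y * (Yᵀ * Y)⁻¹) =
      Matrix.trace ((X * (Xᵀ * X)⁻¹ * Xᵀ) * (Y * (Yᵀ * Y)⁻¹ * Yᵀ)) := by
    have e4 : Yᵀ * X * (Xᵀ * X)⁻¹ * Xᵀ * Y * (Yᵀ * Y)⁻¹ =
        Yᵀ * (X * (Xᵀ * X)⁻¹ * Xᵀ * Y * (Yᵀ * Y)⁻¹) := by simp only [Matrix.mul_assoc]
    rw [e4, Matrix.trace_mul_comm]
    congr 1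
    simp only [Matrix.mul_assoc]
  rw [e3]
  field_simp

variable {ν b : Type*} [Fintype ν] [Fintype b] [DecidableEq b]

lemma appendCol_eq (Y : Matrix ν b ℝ) (w : ν → ℝ) :
    appendCol Y w = fromCols Y (colM w) := rfl

lemma mul_colM {c : Type*} [Fintype ν] (A : Matrix c ν ℝ) (v : ν → ℝ) :
    A * colM v = colM (A *ᵥ v) := by
  ext i j
  simp [colM, Matrix.mul_apply, Matrix.mulVec, dotProduct]

lemma colM_mulVec_one (w : ν → ℝ) : colM w *ᵥ (fun _ => (1:ℝ)) = w := by
  ext i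
  simp [colM, Matrix.mulVec, dotProduct]

lemma transpose_colM_mul (v : ν → ℝ) : (colM v)ᵀ * colM v = Matrix.of fun _ _ => v ⬝ᵥ v := by
  ext i j
  simp [colM, Matrix.mul_apply, dotProduct]

lemma gram_quad {c : Type*} [Fintype c] (M : Matrix ν c ℝ) (v : c → ℝ) :
    v ⬝ᵥ ((Mᵀ * M) *ᵥ v) = (M *ᵥ v) ⬝ᵥ (M *ᵥ v) := by
  rw [← Matrix.mulVec_mulVec, Matrix.dotProduct_mulVec, Matrix.vecMul_transpose]

lemma proj_mul_inv {c : Type*} [Fintype c] [DecidableEq c]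
    (M : Matrix ν c ℝ) (T T' : Matrix c c ℝ) (hTT' : T * T' = 1) (hT'T : T' * T = 1) :
    (M * T) * (((M * T)ᵀ * (M * T))⁻¹) * (M * T)ᵀ = M * (Mᵀ * M)⁻¹ * Mᵀ := by
  have hTtT't : Tᵀ * T'ᵀ = 1 := by rw [← Matrix.transpose_mul, hT'T, Matrix.transpose_one]
  have hT'tTt : T'ᵀ * Tᵀ = 1 := by rw [← Matrix.transpose_mul, hTT', Matrix.transpose_one]
  have hG : (M * T)ᵀ * (M * T) = Tᵀ * (Mᵀ * M) * T := by
    simp only [Matrix.transpose_mul, Matrix.mul_assoc]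
  have hGinv : (Tᵀ * (Mᵀ * M) * T)⁻¹ = T' * ((Mᵀ * M)⁻¹ * T'ᵀ) := by
    rw [Matrix.mul_inv_rev, Matrix.mul_inv_rev, Matrix.inv_eq_right_inv hTT',
      Matrix.inv_eq_right_inv hTtT't]
  rw [hG, hGinv, Matrix.transpose_mul]
  have h1 : T'ᵀ * (Tᵀ * Mᵀ) = Mᵀ := by rw [← Matrix.mul_assoc, hT'tTt, Matrix.one_mul]
  have h2 : T * (T' * ((Mᵀ * M)⁻¹ * Mᵀ)) = (Mᵀ * M)⁻¹ * Mᵀ := by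
    rw [← Matrix.mul_assoc, hTT', Matrix.one_mul]
  calc M * T * (T' * ((Mᵀ * M)⁻¹ * T'ᵀ)) * (Tᵀ * Mᵀ)
      = M * (T * (T' * ((Mᵀ * M)⁻¹ * (T'ᵀ * (Tᵀ * Mᵀ))))) := by simp only [Matrix.mul_assoc]
    _ = M * ((Mᵀ * M)⁻¹ * Mᵀ) := by rw [h1, h2]
    _ = M * (Mᵀ * M)⁻¹ * Mᵀ := by simp only [Matrix.mul_assoc]

lemma proj_append (Y : Matrix ν b ℝ) (w : ν → ℝ) (hGY : (Yᵀ * Y).PosDef)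
    (he : 0 < resid Y w ⬝ᵥ resid Y w) :
    appendCol Y w * ((appendCol Y w)ᵀ * appendCol Y w)⁻¹ * (appendCol Y w)ᵀ =
      Y * (Yᵀ * Y)⁻¹ * Yᵀ +
        colM (resid Y w) * ((colM (resid Y w))ᵀ * colM (resid Y w))⁻¹ * (colM (resid Y w))ᵀ := by
  classical
  set e := resid Y w with hedef
  set E := colM e with hEdef
  set c := ((Yᵀ * Y)⁻¹ * Yᵀ) *ᵥ w with hcdef
  have detY : IsUnit (Yᵀ * Y).det := hGY.det_pos.ne'.isUnit
  have hYc : Y *ᵥ c = (Y * (Yᵀ * Y)⁻¹ * Yᵀ) *ᵥ w := by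
    rw [hcdef, Matrix.mulVec_mulVec]
    simp only [Matrix.mul_assoc]
  have hYe : Yᵀ *ᵥ e = 0 := by
    rw [hedef, resid, Matrix.mulVec_sub, Matrix.mulVec_mulVec]
    have : Yᵀ * (Y * (Yᵀ * Y)⁻¹ * Yᵀ) = Yᵀ := by
      have h0 : Yᵀ * (Y * (Yᵀ * Y)⁻¹ * Yᵀ) = Yᵀ * Y * (Yᵀ * Y)⁻¹ * Yᵀ := by
        simp only [Matrix.mul_assoc]
      rw [h0, Matrix.mul_nonsing_inv _ detY, Matrix.one_mul]
    rw [this, sub_self]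
  have hYE : Yᵀ * E = 0 := by
    rw [hEdef, mul_colM, hYe]
    ext i j; simp [colM]
  have hEY : Eᵀ * Y = 0 := by
    have := congrArg Matrix.transpose hYE
    rwa [Matrix.transpose_mul, Matrix.transpose_transpose, Matrix.transpose_zero] at this
  have detE : IsUnit (Eᵀ * E).det := by
    rw [hEdef, transpose_colM_mul, Matrix.det_unique]
    exact he.ne'.isUnit
  set T : Matrix (b ⊕ Unit) (b ⊕ Unit) ℝ := fromBlocks 1 (-(colM c)) 0 1 with hTdef
  set T' : Matrix (b ⊕ Unit) (b ⊕ Unit) ℝ := fromBlocks 1 (colM c) 0 1 with hT'def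
  have hTT' : T * T' = 1 := by
    rw [hTdef, hT'def, Matrix.fromBlocks_multiply]
    simp [Matrix.fromBlocks_one]
  have hT'T : T' * T = 1 := by
    rw [hTdef, hT'def, Matrix.fromBlocks_multiply]
    simp [Matrix.fromBlocks_one]
  have hMT : appendCol Y w * T = fromCols Y E := by
    rw [appendCol_eq, hTdef, Matrix.fromCols_mul_fromBlocks]
    simp only [Matrix.mul_one, Matrix.mul_zero, Matrix.zero_mul, add_zero, zero_add,
      Matrix.mul_neg]
    rw [mul_colM, hYc]
    ext i j
    rcases j with j | j
    · simp
    · simp [colM, hEdef, hedef, resid]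
      ring
  have key := proj_mul_inv (appendCol Y w) T T' hTT' hT'T
  rw [hMT] at key
  rw [← key]
  have hGram : (fromCols Y E)ᵀ * fromCols Y E = fromBlocks (Yᵀ * Y) 0 0 (Eᵀ * E) := by
    rw [Matrix.transpose_fromCols, Matrix.fromRows_mul_fromCols, hYE, hEY]
  have hGraminv : (fromBlocks (Yᵀ * Y) 0 0 (Eᵀ * E))⁻¹ =
      fromBlocks (Yᵀ * Y)⁻¹ 0 0 (Eᵀ * E)⁻¹ := by
    apply Matrix.inv_eq_right_inv
    rw [Matrix.fromBlocks_multiply]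
    simp only [Matrix.mul_zero, Matrix.zero_mul, add_zero, zero_add,
      Matrix.mul_nonsing_inv _ detY, Matrix.mul_nonsing_inv _ detE, Matrix.fromBlocks_one]
  rw [hGram, hGraminv, Matrix.fromCols_mul_fromBlocks]
  simp only [Matrix.mul_zero, Matrix.zero_mul, add_zero, zero_add]
  rw [Matrix.transpose_fromCols, Matrix.fromCols_mul_fromRows]

lemma posDef_sub_gram (Y : Matrix ν b ℝ) (w : ν → ℝ)
    (hG : ((appendCol Y w)ᵀ * appendCol Y w).PosDef) : (Yᵀ * Y).PosDef := by
  refine Matrix.PosDef.of_dotProduct_mulVec_pos ?_ ?_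
  · have := Matrix.isHermitian_conjTranspose_mul_self Y
    rwa [Matrix.conjTranspose_eq_transpose_of_trivial] at this
  · intro x hx
    have hv : (Sum.elim x (0 : Unit → ℝ)) ≠ 0 := by
      intro h
      apply hx
      ext i
      exact congrFun h (Sum.inl i)
    have h2 := hG.dotProduct_mulVec_pos hv
    have hst : star (Sum.elim x (0 : Unit → ℝ)) = Sum.elim x 0 := by simp [star]
    rw [hst, gram_quad] at h2
    rw [show (star x) = x by simp [star], gram_quad]
    rwa [appendCol_eq, Matrix.fromCols_mulVec_sumElim, Matrix.mulVec_zero, add_zero] at h2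

lemma resid_dot_pos (Y : Matrix ν b ℝ) (w : ν → ℝ)
    (hG : ((appendCol Y w)ᵀ * appendCol Y w).PosDef) :
    0 < resid Y w ⬝ᵥ resid Y w := by
  set v : (b ⊕ Unit) → ℝ := Sum.elim (-(((Yᵀ * Y)⁻¹ * Yᵀ) *ᵥ w)) (fun _ => 1) with hvdef
  have hv : v ≠ 0 := by
    intro h
    have := congrFun h (Sum.inr ())
    simp [hvdef] at this
  have h2 := hG.dotProduct_mulVec_pos hv
  have hst : star v = v := by simp [star]
  rw [hst, gram_quad] at h2
  have hMv : appendCol Y w *ᵥ v = resid Y w := by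
    rw [appendCol_eq, hvdef, Matrix.fromCols_mulVec_sumElim, colM_mulVec_one,
      Matrix.mulVec_neg, Matrix.mulVec_mulVec]
    have hassoc : Y * ((Yᵀ * Y)⁻¹ * Yᵀ) = Y * (Yᵀ * Y)⁻¹ * Yᵀ := by
      simp only [Matrix.mul_assoc]
    rw [hassoc, resid]
    ext i
    simp [Matrix.mulVec]
    ring
  rwa [hMv] at h2

lemma posDef_unit {A : Matrix Unit Unit ℝ} (h : 0 < A () ()) : A.PosDef := by
  refine Matrix.PosDef.of_dotProduct_mulVec_pos ?_ ?_
  · ext i j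
    cases i; cases j
    simp [Matrix.conjTranspose_apply]
  · intro x hx
    have hx0 : x () ≠ 0 := by
      intro h0
      apply hx
      ext i; cases i; exact h0
    have hq : (star x) ⬝ᵥ (A *ᵥ x) = A () () * (x () * x ()) := by
      simp [dotProduct, Matrix.mulVec, star]
      ring
    rw [hq]
    exact mul_pos h (mul_self_pos.mpr hx0)

end Aux

/-- Increment of the sample root-Pillai trace `‖C‖_F` when a variable `w` is appended to the
`𝕐` block, expressed in terms of the increment of the Pillai trace: with
`e = w − 𝕐(𝕐ᵀ𝕐)⁻¹𝕐ᵀw`, if `‖C(𝕐,𝕏)‖_F + ‖C(e,𝕏)‖_F > 0` then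
`‖C((𝕐,w),𝕏)‖_F − ‖C(𝕐,𝕏)‖_F
  = ‖C(e,𝕏)‖_F² / (√(‖C(𝕐,𝕏)‖_F² + ‖C(e,𝕏)‖_F²) + ‖C(𝕐,𝕏)‖_F)`. -/
theorem root_pillai_trace_increment (n a b : ℕ)
    (X : Matrix (Fin n) (Fin a) ℝ) (Y : Matrix (Fin n) (Fin b) ℝ) (w : Fin n → ℝ)
    (hSX : ((n : ℝ)⁻¹ • (Xᵀ * X)).PosDef) (hSY : ((n : ℝ)⁻¹ • (Yᵀ * Y)).PosDef)
    (hGY : ((appendCol Y w)ᵀ * appendCol Y w).PosDef)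
    (hpos : 0 < frobNorm (coh n Y X) + frobNorm (coh n (colM (resid Y w)) X)) :
    frobNorm (coh n (appendCol Y w) X) - frobNorm (coh n Y X) =
      frobSq (coh n (colM (resid Y w)) X) /
        (Real.sqrt (frobSq (coh n Y X) + frobSq (coh n (colM (resid Y w)) X))
          + frobNorm (coh n Y X)) := by
  have he : 0 < resid Y w ⬝ᵥ resid Y w := resid_dot_pos Y w hGY
  have hn : (n : ℝ) ≠ 0 := by
    intro h
    rw [Nat.cast_eq_zero] at h
    subst h
    simp [dotProduct] at he
  have hNpos : 0 < (n : ℝ) := lt_of_le_of_ne (Nat.cast_nonneg n) (Ne.symm hn)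
  have hGYY : (Yᵀ * Y).PosDef := posDef_sub_gram Y w hGY
  have hSM : ((n : ℝ)⁻¹ • ((appendCol Y w)ᵀ * appendCol Y w)).PosDef :=
    posDef_smul_real hGY (inv_pos.mpr hNpos)
  have hSE : ((n : ℝ)⁻¹ • ((colM (resid Y w))ᵀ * colM (resid Y w))).PosDef := by
    apply posDef_unit
    rw [Matrix.smul_apply, transpose_colM_mul]
    simp only [Matrix.of_apply, smul_eq_mul]
    exact mul_pos (inv_pos.mpr hNpos) he
  have hq1 := frobSq_coh n hn X Y hSX hSY
  have hq2 := frobSq_coh n hn X (appendCol Y w) hSX hSM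
  have hq3 := frobSq_coh n hn X (colM (resid Y w)) hSX hSE
  have hadd : frobSq (coh n (appendCol Y w) X) =
      frobSq (coh n Y X) + frobSq (coh n (colM (resid Y w)) X) := by
    rw [hq1, hq2, hq3, proj_append Y w hGYY he, Matrix.mul_add, Matrix.trace_add]
  set p := frobSq (coh n Y X) with hpdef
  set q := frobSq (coh n (colM (resid Y w)) X) with hqdef
  have hp : 0 ≤ p := frobSq_nonneg _
  have hq : 0 ≤ q := frobSq_nonneg _
  rw [frobNorm, frobNorm] at hpos ⊢
  rw [hadd]
  have hd : 0 < Real.sqrt (p + q) + Real.sqrt p := by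
    have h1 : Real.sqrt q ≤ Real.sqrt (p + q) := Real.sqrt_le_sqrt (by linarith)
    linarith
  rw [eq_div_iff hd.ne']
  have h1 : Real.sqrt (p + q) * Real.sqrt (p + q) = p + q :=
    Real.mul_self_sqrt (by linarith)
  have h2 : Real.sqrt p * Real.sqrt p = p := Real.mul_self_sqrt hp
  nlinarith [h1, h2]
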